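/- Let A be an invertible n×n real matrix, P an r×n real matrix, q ∈ ℝⁿ, d ∈ ℝʳ. For λ > 0 let u_λ = (AᵀA + λ⁻²PᵀP)⁻¹(Aᵀq + λ⁻²Pᵀd) (this matrix is invertible for all sufficiently large λ since A is invertible). Then u_λ converges to A⁻¹q as λ → ∞. -/

import Mathlib

set_option maxHeartbeats 1000000

open Matrix

/-- As the penalty parameter `λ` tends to infinity, the data-augmented wavefield solve
`u_λ = (AᵀA + λ⁻²PᵀP)⁻¹(Aᵀq + λ⁻²Pᵀd)` reduces to the exact PDE solve `A⁻¹q`; the matrix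
`AᵀA + λ⁻²PᵀP` is invertible for all sufficiently large `λ`. -/
theorem stmt_13 {n r : ℕ} (A : Matrix (Fin n) (Fin n) ℝ) (hA : IsUnit A)
    (P : Matrix (Fin r) (Fin n) ℝ) (q : Fin n → ℝ) (d : Fin r → ℝ) :
    (∀ᶠ lam : ℝ in Filter.atTop, IsUnit (Aᵀ * A + (lam ^ 2)⁻¹ • (Pᵀ * P))) ∧
    Filter.Tendsto
      (fun lam : ℝ =>
        (Aᵀ * A + (lam ^ 2)⁻¹ • (Pᵀ * P))⁻¹ *ᵥ (Aᵀ *ᵥ q + (lam ^ 2)⁻¹ • (Pᵀ *ᵥ d)))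
      Filter.atTop (nhds (A⁻¹ *ᵥ q)) := by
  have hAd : A.det ≠ 0 := by
    simpa [isUnit_iff_ne_zero] using (Matrix.isUnit_iff_isUnit_det A).mp hA
  -- t ↦ (lam^2)⁻¹ tends to 0
  have ht : Filter.Tendsto (fun lam : ℝ => (lam ^ 2)⁻¹) Filter.atTop (nhds 0) :=
    (Filter.tendsto_pow_atTop two_ne_zero).inv_tendsto_atTop
  set g : ℝ → Matrix (Fin n) (Fin n) ℝ := fun t => Aᵀ * A + t • (Pᵀ * P) with hg
  have hgc : Continuous g := by
    apply continuous_const.add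
    exact continuous_id.smul continuous_const
  have hg0 : g 0 = Aᵀ * A := by simp [hg]
  have hdet0 : (g 0).det ≠ 0 := by
    rw [hg0, Matrix.det_mul, Matrix.det_transpose]
    exact mul_ne_zero hAd hAd
  -- det ∘ g is continuous and nonzero at 0, hence eventually nonzero
  have hdetc : Continuous fun t => (g t).det := hgc.matrix_det
  have hev : ∀ᶠ t : ℝ in nhds 0, (g t).det ≠ 0 :=
    (hdetc.continuousAt).eventually_ne hdet0
  constructor
  · exact (ht.eventually hev).mono fun lam h => by
      rw [Matrix.isUnit_iff_isUnit_det]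
      exact isUnit_iff_ne_zero.mpr h
  · -- continuity at 0 of the full expression
    have hinv : ContinuousAt Inv.inv (g 0) :=
      continuousAt_matrix_inv _ (by
        rw [Ring.inverse_eq_inv']
        exact continuousAt_inv₀ hdet0)
    have hginv : ContinuousAt (fun t => (g t)⁻¹) 0 :=
      hinv.comp hgc.continuousAt
    have hvec : ContinuousAt (fun t : ℝ => Aᵀ *ᵥ q + t • (Pᵀ *ᵥ d)) 0 :=
      (continuous_const.add (continuous_id.smul continuous_const)).continuousAt
    have hmain : ContinuousAt (fun t : ℝ => (g t)⁻¹ *ᵥ (Aᵀ *ᵥ q + t • (Pᵀ *ᵥ d))) 0 := by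
      exact (Continuous.matrix_mulVec (continuous_fst) (continuous_snd)).continuousAt.comp
        (hginv.prodMk hvec)
    have hval : (g 0)⁻¹ *ᵥ (Aᵀ *ᵥ q + (0:ℝ) • (Pᵀ *ᵥ d)) = A⁻¹ *ᵥ q := by
      rw [hg0]
      have : (Aᵀ * A)⁻¹ = A⁻¹ * (Aᵀ)⁻¹ := Matrix.mul_inv_rev _ _
      simp only [zero_smul, add_zero, this]
      rw [Matrix.mulVec_mulVec, Matrix.mul_assoc,
        Matrix.nonsing_inv_mul Aᵀ (isUnit_iff_ne_zero.mpr (by simpa using hAd)),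
        Matrix.mul_one]
    have := hmain.tendsto
    rw [hval] at this
    exact this.comp ht
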